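/- The deterministic mechanism M(x,·) = δ_{x̄} releasing the exact empirical average x̄ = (1/n)∑x_i satisfies (𝓘, 𝒢_x^r, r₁ + log r₂, 0)-persuasive privacy: for every x ∈ ℝ^n, every Gaussian prior Q ∈ 𝒢_x^r, and every i ∈ {1,…,n}, the change in the marginal Dawid–Sebastiani score upon Bayes updating with x̄ satisfies D_i(Q,x) − D_i(Q_{x̄},x) ≤ r₁ + log r₂. -/

import Mathlib

open Matrix

set_option maxHeartbeats 1600000 in
/-- the deterministic average mechanism `M(x,·) = δ_{x̄}` satisfies
`(𝓘, 𝒢ₓʳ, r₁ + log r₂, 0)`-persuasive privacy: for every dataset `x ∈ ℝⁿ` (`n ≥ 2`), every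
Gaussian prior `N(μ, Σ)` in the class `𝒢ₓʳ` — i.e. `(x̄−μ̄)²/Σ̄ ≤ r₁` and
`c_Φ = λ₁/λₙ ≤ r₂(1 − σᵢ²/‖σ‖²)` for all `i`, where `Σ = σᵀΦσ` with correlation matrix `Φ`
(eigenvalue bounds expressed via the Rayleigh hypothesis `hRay`) — and every coordinate `i`,
the drop in the marginal Dawid–Sebastiani score upon Bayes updating with `x̄` is at most
`r₁ + log r₂`. Here `Σ̄ = v`, `vᵢ = (1/n)∑ⱼ Φᵢⱼσⱼ`, `v = (1/n)∑ᵢ σᵢvᵢ`, and the posterior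
marginal mean and variance are `μᵢ + σᵢ(vᵢ/v)(x̄−μ̄)` and `σᵢ²(1 − vᵢ²/v)`. -/
theorem stmt13 {n : ℕ} (hn : 2 ≤ n)
    (x μ σ : Fin n → ℝ) (hσ : ∀ i, 0 < σ i)
    (Φ : Matrix (Fin n) (Fin n) ℝ) (hΦ : Φ.PosDef) (hdiag : ∀ i, Φ i i = 1)
    (lam₁ lamₙ : ℝ) (hlamₙ : 0 < lamₙ)
    (hRay : ∀ γ : Fin n → ℝ, lamₙ * (∑ j, γ j ^ 2) ≤ γ ⬝ᵥ Φ.mulVec γ ∧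
      γ ⬝ᵥ Φ.mulVec γ ≤ lam₁ * (∑ j, γ j ^ 2))
    (r₁ r₂ : ℝ) (hr₁ : 0 < r₁) (hr₂ : 1 < r₂) :
    let xbar := (1 / (n : ℝ)) * ∑ i, x i
    let μbar := (1 / (n : ℝ)) * ∑ i, μ i
    let vi : Fin n → ℝ := fun i => (1 / (n : ℝ)) * ∑ j, Φ i j * σ j
    let v := (1 / (n : ℝ)) * ∑ i, σ i * vi i
    ((xbar - μbar) ^ 2 / v ≤ r₁) →
    (∀ i, lam₁ / lamₙ ≤ r₂ * (1 - σ i ^ 2 / ∑ j, σ j ^ 2)) →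
    ∀ i, (Real.log (σ i ^ 2) + (x i - μ i) ^ 2 / σ i ^ 2) -
        (Real.log (σ i ^ 2 * (1 - vi i ^ 2 / v)) +
          (x i - (μ i + σ i * (vi i / v) * (xbar - μbar))) ^ 2 /
            (σ i ^ 2 * (1 - vi i ^ 2 / v))) ≤
      r₁ + Real.log r₂ := by
  intro xbar μbar vi v h1 h2 i
  have hn0 : (0:ℝ) < (n:ℝ) := by
    have : 0 < n := lt_of_lt_of_le (by norm_num) hn
    exact_mod_cast this
  set w : Fin n → ℝ := Φ.mulVec σ with hw
  set V : ℝ := σ ⬝ᵥ w with hVdef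
  have hσne : σ ≠ 0 := by
    intro h
    have := hσ i
    rw [h] at this
    simp at this
  have hV : 0 < V := hΦ.dotProduct_mulVec_pos hσne
  -- vi and v in terms of w and V
  have hvi : ∀ k, vi k = w k / (n:ℝ) := by
    intro k
    simp only [vi, hw, Matrix.mulVec, dotProduct]
    ring
  have hv : v = V / (n:ℝ)^2 := by
    have e : ∀ k : Fin n, σ k * vi k = σ k * w k / (n:ℝ) := fun k => by rw [hvi k]; ring
    simp only [v, hVdef, dotProduct, e]
    rw [← Finset.sum_div]
    ring
  have hv0 : 0 < v := by rw [hv]; positivity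
  -- symmetry
  have hsym : ∀ a b, Φ a b = Φ b a := by
    intro a b
    have := hΦ.1.apply b a
    simpa using this
  -- the bilinear expansion
  have hexp : ∀ t : ℝ, (Pi.single i (1:ℝ) - t • σ) ⬝ᵥ Φ.mulVec (Pi.single i (1:ℝ) - t • σ)
      = 1 - 2 * t * w i + t^2 * V := by
    intro t
    rw [Matrix.mulVec_sub, Matrix.mulVec_smul, sub_dotProduct, smul_dotProduct,
      dotProduct_sub, dotProduct_sub, dotProduct_smul, dotProduct_smul,
      single_dotProduct, single_dotProduct]
    have h1' : Φ.mulVec (Pi.single i (1:ℝ)) = fun a => Φ a i := by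
      funext a; simp [Matrix.mulVec_single]
    rw [h1']
    have h2' : (σ ⬝ᵥ fun a => Φ a i) = w i := by
      simp only [dotProduct, hw, Matrix.mulVec, dotProduct]
      exact Finset.sum_congr rfl (fun a _ => by rw [hsym a i]; ring)
    rw [h2']
    simp only [smul_eq_mul, hdiag i, hVdef, dotProduct, ← hw]
    ring_nf
  set S : ℝ := ∑ j, σ j ^ 2 with hS
  have hS0 : 0 < S := by
    rw [hS]
    exact Finset.sum_pos (fun j _ => pow_pos (hσ j) 2) ⟨i, Finset.mem_univ i⟩
  -- lam_n ≤ 1 ≤ lam₁ (test at e_i)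
  have hei := hRay (Pi.single i (1:ℝ))
  have heival : (Pi.single i (1:ℝ)) ⬝ᵥ Φ.mulVec (Pi.single i (1:ℝ)) = 1 := by
    have := hexp 0
    simpa using this
  have heisum : (∑ j, (Pi.single i (1:ℝ) : Fin n → ℝ) j ^ 2) = 1 := by
    simp [Pi.single_apply, Finset.sum_ite_eq']
  have hlam1 : 1 ≤ lam₁ := by
    have := hei.2
    rw [heival, heisum] at this
    linarith
  have hlamn1 : lamₙ ≤ 1 := by
    have := hei.1
    rw [heival, heisum] at this
    linarith
  -- key bound: 1 - (w i)^2 / V ≥ 1/r₂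
  have hr₂0 : (0:ℝ) < r₂ := lt_trans one_pos hr₂
  have hfrac : 1 - σ i ^ 2 / S ≥ lam₁ / (lamₙ * r₂) := by
    have := h2 i
    rw [div_le_iff₀ hlamₙ] at this
    rw [ge_iff_le, div_le_iff₀ (by positivity)]
    nlinarith
  have hkey : 1/r₂ ≤ 1 - (w i)^2 / V := by
    set t : ℝ := w i / V with ht
    have hγ := (hRay (Pi.single i (1:ℝ) - t • σ)).1
    rw [hexp t] at hγ
    have hval : 1 - 2 * t * w i + t^2 * V = 1 - (w i)^2 / V := by
      rw [ht]; field_simp; ring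
    rw [hval] at hγ
    have hexpand : (∑ j, ((Pi.single i (1:ℝ) - t • σ : Fin n → ℝ) j)^2)
        = 1 - 2 * t * σ i + t^2 * S := by
      simp only [Pi.sub_apply, Pi.smul_apply, smul_eq_mul, sub_sq, hS]
      rw [Finset.sum_add_distrib, Finset.sum_sub_distrib]
      have e2 : (∑ j, 2 * (Pi.single i (1:ℝ) : Fin n → ℝ) j * (t * σ j)) = 2 * t * σ i := by
        simp [Pi.single_apply, ite_mul, Finset.sum_ite_eq', mul_comm]
        ring
      have e3 : (∑ j, (t * σ j)^2) = t^2 * ∑ j, σ j ^2 := by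
        rw [Finset.mul_sum]; exact Finset.sum_congr rfl (fun j _ => by ring)
      rw [heisum, e2, e3]
    have hsq : (∑ j, ((Pi.single i (1:ℝ) - t • σ : Fin n → ℝ) j)^2) ≥ 1 - σ i ^ 2 / S := by
      rw [hexpand, ge_iff_le]
      have hid : t^2 * S - 2*t*σ i + σ i ^2 / S = (t * S - σ i)^2 / S := by
        field_simp; ring
      nlinarith [sq_nonneg (t * S - σ i), hS0, div_nonneg (sq_nonneg (t*S - σ i)) hS0.le]
    have c1 : lamₙ * (1 - σ i ^2 / S) ≤ 1 - (w i)^2 / V := by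
      calc lamₙ * (1 - σ i ^2 / S)
          ≤ lamₙ * (∑ j, ((Pi.single i (1:ℝ) - t • σ : Fin n → ℝ) j)^2) :=
            mul_le_mul_of_nonneg_left hsq hlamₙ.le
        _ ≤ 1 - (w i)^2 / V := hγ
    have c2 : lamₙ * (lam₁ / (lamₙ * r₂)) = lam₁ / r₂ := by
      field_simp
    have c3 : lam₁ / r₂ ≤ lamₙ * (1 - σ i ^2 / S) := by
      rw [← c2]
      exact mul_le_mul_of_nonneg_left hfrac hlamₙ.le
    have c4 : 1 / r₂ ≤ lam₁ / r₂ := by gcongr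
    linarith
  -- transfer to (vi, v) form
  have hceq : 1 - vi i ^2 / v = 1 - (w i)^2 / V := by
    rw [hvi i, hv]
    field_simp
  have hc_ge : 1/r₂ ≤ 1 - vi i ^2 / v := by rw [hceq]; exact hkey
  have hc0 : (0:ℝ) < 1 - vi i ^2 / v := lt_of_lt_of_le (by positivity) hc_ge
  have hsi := hσ i
  -- log part
  have hlog : Real.log (σ i ^2) - Real.log (σ i ^2 * (1 - vi i ^2 / v)) ≤ Real.log r₂ := by
    rw [Real.log_mul (by positivity) (ne_of_gt hc0)]
    have hl : Real.log (1/r₂) ≤ Real.log (1 - vi i ^2 / v) :=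
      Real.log_le_log (by positivity) hc_ge
    rw [Real.log_div one_ne_zero (ne_of_gt hr₂0), Real.log_one] at hl
    linarith
  -- quadratic part
  have hvne : v ≠ 0 := ne_of_gt hv0
  have hsne : σ i ≠ 0 := ne_of_gt hsi
  have hv2 : v - vi i ^2 ≠ 0 := by
    have : 0 < (1 - vi i ^2 / v) * v := mul_pos hc0 hv0
    have h' : (1 - vi i ^2 / v) * v = v - vi i ^2 := by field_simp
    rw [h'] at this
    exact ne_of_gt this
  have hquad : (x i - μ i)^2 / σ i ^2
      - (x i - (μ i + σ i * (vi i / v) * (xbar - μbar)))^2 / (σ i ^2 * (1 - vi i ^2 / v))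
      = (xbar - μbar)^2 / v
        - (σ i * (xbar - μbar) - (x i - μ i) * vi i)^2 / (σ i ^2 * (1 - vi i ^2 / v) * v) := by
    have hcalt : 1 - vi i ^2 / v = (v - vi i ^2) / v := by field_simp
    rw [hcalt]
    field_simp
    ring
  have h0 : 0 ≤ (σ i * (xbar - μbar) - (x i - μ i) * vi i)^2 / (σ i ^2 * (1 - vi i ^2 / v) * v) := by
    positivity
  have hquad_le : (x i - μ i)^2 / σ i ^2
      - (x i - (μ i + σ i * (vi i / v) * (xbar - μbar)))^2 / (σ i ^2 * (1 - vi i ^2 / v)) ≤ r₁ := by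
    rw [hquad]
    linarith
  linarith [hlog, hquad_le]
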